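/- For all natural numbers l, m, k with m ≤ l, the 2-adic norm of the rational number σ_l^m(k) is at most the 2-adic norm of k! (equivalently, the 2-adic valuation of σ_l^m(k) is at least the 2-adic valuation of k!, with the convention that this holds trivially when σ_l^m(k) = 0). -/
import Mathlib



lemma fact2k (k : ℕ) : (2 * k).factorial = 2 ^ k * k.factorial * Nat.doubleFactorial (2 * k - 1) := by
  cases k with
  | zero => rfl
  | succ j =>
      have h : 2 * (j + 1) = (2 * j + 1) + 1 := by ring
      rw [h, Nat.factorial_eq_mul_doubleFactorial]
      have h2 : 2 * j + 1 + 1 = 2 * (j + 1) := by ring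
      rw [h2, Nat.doubleFactorial_two_mul]
      have h3 : 2 * (j + 1) - 1 = 2 * j + 1 := by omega
      rw [h3]

lemma choose_mul_fact (k : ℕ) :
    (2 * k).choose k * k.factorial = 2 ^ k * Nat.doubleFactorial (2 * k - 1) := by
  have h := Nat.choose_mul_factorial_mul_factorial (show k ≤ 2 * k by omega)
  have h2 : 2 * k - k = k := by omega
  rw [h2] at h
  have h3 := fact2k k
  have hf : 0 < k.factorial := k.factorial_pos
  nlinarith [h, h3]

lemma odd_dfact : ∀ k : ℕ, Odd (Nat.doubleFactorial (2 * k + 1)) := by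
  intro k
  induction k with
  | zero => exact ⟨0, rfl⟩
  | succ j ih =>
      have : 2 * (j + 1) + 1 = (2 * j + 1) + 2 := by ring
      rw [this, Nat.doubleFactorial_add_two]
      exact (Odd.mul (by exact ⟨j+1, by ring⟩) ih)

lemma odd_dfact' (k : ℕ) : Odd (Nat.doubleFactorial (2 * k - 1)) := by
  cases k with
  | zero => exact ⟨0, rfl⟩
  | succ j => have : 2 * (j+1) - 1 = 2 * j + 1 := by omega
              rw [this]; exact odd_dfact j

lemma norm_odd (n : ℕ) (h : Odd n) : ‖((n : ℚ) : ℚ_[2])‖ = 1 := by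
  have h1 : ‖((n : ℤ) : ℚ_[2])‖ ≤ 1 := Padic.norm_int_le_one _
  have h2 : ¬ ‖((n : ℤ) : ℚ_[2])‖ < 1 := by
    rw [Padic.norm_intCast_lt_one_iff]
    intro hd
    have : (2 : ℕ) ∣ n := by exact_mod_cast hd
    exact (Nat.not_even_iff_odd.mpr h) (even_iff_two_dvd.mpr this)
  have : ‖((n : ℤ) : ℚ_[2])‖ = 1 := le_antisymm h1 (not_lt.mp h2)
  rw [← this]; norm_cast

lemma norm_int_prod_le (a b : ℕ) (k : ℕ) :
    ‖(((-1 : ℚ) ^ k * a * b : ℚ) : ℚ_[2])‖ ≤ 1 := by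
  have := Padic.norm_int_le_one (p := 2) ((-1) ^ k * a * b)
  have hc : (((((-1 : ℤ)) ^ k * a * b : ℤ) : ℚ) : ℚ_[2]) = (((-1 : ℚ) ^ k * a * b : ℚ) : ℚ_[2]) := by
    push_cast; ring
  rw [← hc]
  simpa using this


/-- The coefficient `σ_l^m(k)` of the Holt–Ille polynomial `H_l^m`. -/
def sigmaLM (l m k : ℕ) : ℚ :=
  if (l + m) % 2 = 0 then
    (-2 : ℚ) ^ k * (((l - m) / 2).choose k : ℚ) * (((l + m) / 2).choose k : ℚ) /
      (((2 * k).choose k : ℚ))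
  else
    (-2 : ℚ) ^ k * (((l - m) / 2).choose k : ℚ) * (((l + m) / 2).choose k : ℚ) /
      ((((2 * k).choose k : ℚ)) * (2 * (k : ℚ) + 1))

/-- The value `H_l^m(−2) = Σ_{k=0}^{⌊(l−m)/2⌋} σ_l^m(k)`. -/
def HLM (l m : ℕ) : ℚ := ∑ k ∈ Finset.range ((l - m) / 2 + 1), sigmaLM l m k

/-- `a ≡ b (mod 2^N)` for rationals (with odd denominators), expressed via the 2-adic
norm on `ℚ₂`: it means `‖a − b‖₂ ≤ 2^(−N)`. -/
def Cong2 (a b : ℚ) (N : ℕ) : Prop :=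
  ‖((a - b : ℚ) : ℚ_[2])‖ ≤ (2 : ℝ) ^ (-(N : ℤ))

/-- `v₂(σ_l^m(k)) ≥ v₂(k!)`, i.e. `‖σ_l^m(k)‖₂ ≤ ‖k!‖₂`. -/
theorem sigmaLM_norm_le (l m k : ℕ) (hml : m ≤ l) :
    ‖((sigmaLM l m k : ℚ) : ℚ_[2])‖ ≤ ‖((k.factorial : ℚ) : ℚ_[2])‖ := by
  set a := ((l - m) / 2).choose k with ha
  set b := ((l + m) / 2).choose k with hb
  set D := Nat.doubleFactorial (2 * k - 1) with hD
  have hDodd := odd_dfact' k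
  have hDne : (D : ℚ) ≠ 0 := Nat.cast_ne_zero.mpr (Nat.doubleFactorial_pos _).ne'
  have hC : (((2 * k).choose k : ℕ) : ℚ) ≠ 0 :=
    Nat.cast_ne_zero.mpr (Nat.choose_pos (by omega)).ne'
  have key : (((2 * k).choose k : ℕ) : ℚ) * (k.factorial : ℚ) = 2 ^ k * (D : ℚ) := by
    exact_mod_cast congrArg (Nat.cast (R := ℚ)) (choose_mul_fact k)
  have hneg : (-2 : ℚ) ^ k = (-1) ^ k * 2 ^ k := by rw [← neg_one_mul, mul_pow]
  by_cases hpar : (l + m) % 2 = 0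
  · have hσ : sigmaLM l m k * (D : ℚ) = (-1 : ℚ) ^ k * a * b * k.factorial := by
      rw [sigmaLM, if_pos hpar, div_mul_eq_mul_div, div_eq_iff hC, hneg]
      linear_combination (-(-1 : ℚ) ^ k * a * b) * key
    have h1 : ‖((sigmaLM l m k : ℚ) : ℚ_[2])‖
        = ‖((sigmaLM l m k * (D : ℚ) : ℚ) : ℚ_[2])‖ := by
      rw [Rat.cast_mul, norm_mul, norm_odd D hDodd, mul_one]
    rw [h1, hσ, Rat.cast_mul, norm_mul]
    calc ‖(((-1 : ℚ) ^ k * a * b : ℚ) : ℚ_[2])‖ * ‖((k.factorial : ℚ) : ℚ_[2])‖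
        ≤ 1 * ‖((k.factorial : ℚ) : ℚ_[2])‖ :=
          mul_le_mul_of_nonneg_right (norm_int_prod_le a b k) (norm_nonneg _)
      _ = _ := one_mul _
  · have hEodd : Odd (2 * k + 1) := ⟨k, by ring⟩
    have hEne : ((2 * k + 1 : ℕ) : ℚ) ≠ 0 := Nat.cast_ne_zero.mpr (by omega)
    have hσ : sigmaLM l m k * ((D : ℚ) * ((2 * k + 1 : ℕ) : ℚ))
        = (-1 : ℚ) ^ k * a * b * k.factorial := by
      rw [sigmaLM, if_neg hpar]
      have hE2 : (2 * (k : ℚ) + 1) = ((2 * k + 1 : ℕ) : ℚ) := by push_cast; ring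
      rw [hE2, div_mul_eq_mul_div, div_eq_iff (mul_ne_zero hC hEne), hneg]
      linear_combination (-(-1 : ℚ) ^ k * a * b * ((2 * k + 1 : ℕ) : ℚ)) * key
    have h1 : ‖((sigmaLM l m k : ℚ) : ℚ_[2])‖
        = ‖((sigmaLM l m k * ((D : ℚ) * ((2 * k + 1 : ℕ) : ℚ)) : ℚ) : ℚ_[2])‖ := by
      rw [Rat.cast_mul, norm_mul, Rat.cast_mul, norm_mul, norm_odd D hDodd,
        norm_odd _ hEodd, mul_one, mul_one]
    rw [h1, hσ, Rat.cast_mul, norm_mul]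
    calc ‖(((-1 : ℚ) ^ k * a * b : ℚ) : ℚ_[2])‖ * ‖((k.factorial : ℚ) : ℚ_[2])‖
        ≤ 1 * ‖((k.factorial : ℚ) : ℚ_[2])‖ :=
          mul_le_mul_of_nonneg_right (norm_int_prod_le a b k) (norm_nonneg _)
      _ = _ := one_mul _
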